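/- Let G = (V,E) be a graph on n ≥ 10 vertices and let r ≥ 1 be an integer. Then there exists a partition V = V_1 ∪ … ∪ V_m into pairwise disjoint nonempty sets such that: (1) for each i ∈ [m], any two vertices of B(V_i, r) are joined by a path lying inside the induced subgraph G[B(V_i, r)] of length at most 6r log₂ n + 2r (in particular G[B(V_i, r)] is connected with diameter at most 6r log₂ n + 2r); and (2) every vertex v ∈ V lies in at most 2 log₂ n of the sets B(V_i, r). -/

import Mathlib

open scoped BigOperators Classical

noncomputable section

/-- The ball of radius `r` around the vertex set `S`: all vertices joined to some
vertex of `S` by a walk of length at most `r` (this is `{v : dist_G(v, S) ≤ r}`). -/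
def gball {V : Type*} [Fintype V] (G : SimpleGraph V) (S : Finset V) (r : ℕ) :
    Finset V :=
  Finset.univ.filter (fun v => ∃ s ∈ S, ∃ w : G.Walk v s, w.length ≤ r)

namespace LDDAux

open SimpleGraph Finset

variable {V : Type*} [Fintype V] [DecidableEq V] (G : SimpleGraph V)

lemma mem_gball {S : Finset V} {k : ℕ} {v : V} :
    v ∈ gball G S k ↔ ∃ s ∈ S, ∃ w : G.Walk v s, w.length ≤ k := by
  simp [gball]

lemma self_mem_gball {S : Finset V} (k : ℕ) {s : V} (h : s ∈ S) : s ∈ gball G S k :=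
  (mem_gball G).2 ⟨s, h, SimpleGraph.Walk.nil, by simp⟩

lemma gball_mono {S T : Finset V} (h : S ⊆ T) (k : ℕ) : gball G S k ⊆ gball G T k := by
  intro v hv
  obtain ⟨s, hs, w, hw⟩ := (mem_gball G).1 hv
  exact (mem_gball G).2 ⟨s, h hs, w, hw⟩

/-- Every vertex on a short walk into `C` is in the `k`-ball of `C`. -/
lemma walk_support_gball {C : Finset V} {k : ℕ} {a c : V} (w : G.Walk a c)
    (hc : c ∈ C) (hw : w.length ≤ k) : ∀ p ∈ w.support, p ∈ gball G C k := by
  intro p hp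
  obtain ⟨q, q', rfl⟩ := (SimpleGraph.Walk.mem_support_iff_exists_append).1 hp
  refine (mem_gball G).2 ⟨c, hc, q', ?_⟩
  rw [SimpleGraph.Walk.length_append] at hw
  omega

lemma mem_support_append {a b c p : V} {w₁ : G.Walk a b} {w₂ : G.Walk b c}
    (hp : p ∈ (w₁.append w₂).support) : p ∈ w₁.support ∨ p ∈ w₂.support := by
  rw [SimpleGraph.Walk.support_append] at hp
  rcases List.mem_append.1 hp with h | h
  · exact Or.inl h
  · exact Or.inr (List.mem_of_mem_tail h)

/-- The coalescing chain: `Z 0 = {u}`, `Z (s+1) = B(Z s, 2r) ∩ P`. -/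
def chain (P : Finset V) (u : V) (r : ℕ) : ℕ → Finset V
  | 0 => {u}
  | s + 1 => gball G (chain P u r s) (2 * r) ∩ P

variable {P : Finset V} {u : V} {r : ℕ}

lemma chain_subset (hu : u ∈ P) : ∀ s, chain G P u r s ⊆ P := by
  intro s
  cases s with
  | zero => intro x hx; simp [chain] at hx; subst hx; exact hu
  | succ s => exact Finset.inter_subset_right

lemma chain_mono_succ (hu : u ∈ P) (s : ℕ) : chain G P u r s ⊆ chain G P u r (s + 1) := by
  intro x hx
  show x ∈ gball G (chain G P u r s) (2 * r) ∩ P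
  exact Finset.mem_inter.2 ⟨self_mem_gball G _ hx, chain_subset G hu s hx⟩

lemma chain_mono (hu : u ∈ P) {s t : ℕ} (h : s ≤ t) : chain G P u r s ⊆ chain G P u r t := by
  induction t with
  | zero => simp_all
  | succ t ih =>
    rcases Nat.lt_or_ge s (t + 1) with h' | h'
    · exact (ih (by omega)).trans (chain_mono_succ G hu t)
    · have : s = t + 1 := by omega
      subst this; exact Finset.Subset.refl _

lemma mem_chain_self (hu : u ∈ P) (s : ℕ) : u ∈ chain G P u r s :=
  chain_mono G hu (Nat.zero_le s) (by simp [chain])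

/-- Walk from any chain member back to the seed, staying in the `r`-ball of the chain. -/
lemma chain_walk (hu : u ∈ P) :
    ∀ s, ∀ z ∈ chain G P u r s, ∃ w : G.Walk z u, w.length ≤ 2 * r * s ∧
      ∀ p ∈ w.support, p ∈ gball G (chain G P u r s) r := by
  intro s
  induction s with
  | zero =>
    intro z hz
    simp only [chain, Finset.mem_singleton] at hz
    subst hz
    refine ⟨SimpleGraph.Walk.nil, by simp, ?_⟩
    intro p hp
    simp only [SimpleGraph.Walk.support_nil, List.mem_singleton] at hp
    subst hp
    exact self_mem_gball G _ (by simp [chain])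
  | succ s ih =>
    intro z hz
    have hz' : z ∈ gball G (chain G P u r s) (2 * r) ∩ P := hz
    obtain ⟨hz1, _⟩ := Finset.mem_inter.1 hz'
    obtain ⟨z', hz'm, w₁, hw₁⟩ := (mem_gball G).1 hz1
    obtain ⟨w₂, hw₂, hs₂⟩ := ih z' hz'm
    refine ⟨w₁.append w₂, ?_, ?_⟩
    · rw [SimpleGraph.Walk.length_append]
      have : 2 * r * (s + 1) = 2 * r * s + 2 * r := by ring
      omega
    · intro p hp
      rcases mem_support_append G hp with h | h
      · obtain ⟨q, q', rfl⟩ := (SimpleGraph.Walk.mem_support_iff_exists_append).1 h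
        rw [SimpleGraph.Walk.length_append] at hw₁
        by_cases hq' : q'.length ≤ r
        · exact (mem_gball G).2 ⟨z', chain_mono_succ G hu s hz'm, q', hq'⟩
        · refine (mem_gball G).2 ⟨z, hz, q.reverse, ?_⟩
          rw [SimpleGraph.Walk.length_reverse]
          omega
      · exact gball_mono G (chain_mono_succ G hu s) r (hs₂ p h)

/-- The "good cluster" property: the `r`-ball around `C` has the required
low-diameter-with-internal-walks property. -/
def Good (n r : ℕ) (C : Finset V) : Prop :=
  ∀ x ∈ gball G C r, ∀ y ∈ gball G C r,
    ∃ w : G.Walk x y, ((w.length : ℝ) ≤ 6 * r * Real.logb 2 n + 2 * r ∧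
      ∀ p ∈ w.support, p ∈ gball G C r)

/-- Carve a single cluster out of the pool `P`. -/
lemma carve (n : ℕ) (hn : Fintype.card V = n) (hn2 : 2 ≤ n) (r : ℕ)
    (P : Finset V) (hP : P.Nonempty) :
    ∃ C R : Finset V, C.Nonempty ∧ C ⊆ R ∧ R ⊆ P ∧
      2 * (R \ C).card ≤ R.card ∧
      (∀ x ∈ P, x ∉ R → x ∉ gball G C (2 * r)) ∧
      Good G n r C := by
  obtain ⟨u, hu⟩ := hP
  set Z : ℕ → Finset V := chain G P u r with hZ
  -- there is a stopping time
  have hex : ∃ t, (Z (t + 1)).card < 2 * (Z t).card := by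
    by_contra hcon
    push_neg at hcon
    have hgrow : ∀ s, 2 ^ s ≤ (Z s).card := by
      intro s
      induction s with
      | zero => simp [hZ, chain]
      | succ s ih =>
        have := hcon s
        calc 2 ^ (s + 1) = 2 * 2 ^ s := by ring
        _ ≤ 2 * (Z s).card := by omega
        _ ≤ (Z (s + 1)).card := this
    have h1 := hgrow n
    have h2 : (Z n).card ≤ n := hn ▸ Finset.card_le_univ _
    have := @Nat.lt_two_pow_self n
    omega
  set t := Nat.find hex with htdef
  have ht : (Z (t + 1)).card < 2 * (Z t).card := Nat.find_spec hex
  have hmin : ∀ s < t, 2 * (Z s).card ≤ (Z (s + 1)).card := by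
    intro s hs
    have := Nat.find_min hex hs
    omega
  have hpow : 2 ^ t ≤ n := by
    have hg : ∀ s, s ≤ t → 2 ^ s ≤ (Z s).card := by
      intro s hs
      induction s with
      | zero => simp [hZ, chain]
      | succ s ih =>
        have h1 := ih (by omega)
        have h2 := hmin s (by omega)
        calc 2 ^ (s + 1) = 2 * 2 ^ s := by ring
        _ ≤ 2 * (Z s).card := by omega
        _ ≤ (Z (s + 1)).card := h2
    have h1 := hg t (le_refl t)
    have h2 : (Z t).card ≤ n := hn ▸ Finset.card_le_univ _
    omega
  have hCR : Z t ⊆ Z (t + 1) := chain_mono_succ G hu t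
  refine ⟨Z t, Z (t + 1), ⟨u, mem_chain_self G hu t⟩, hCR, chain_subset G hu (t + 1), ?_, ?_, ?_⟩
  · -- size of the annulus
    have h1 : (Z (t + 1) \ Z t).card = (Z (t + 1)).card - (Z t).card :=
      Finset.card_sdiff_of_subset hCR
    have h2 : (Z t).card ≤ (Z (t + 1)).card := Finset.card_le_card hCR
    omega
  · -- far property
    intro x hxP hxR hxg
    exact hxR (Finset.mem_inter.2 ⟨hxg, hxP⟩)
  · -- Good
    intro x hx y hy
    obtain ⟨cx, hcx, wx, hwx⟩ := (mem_gball G).1 hx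
    obtain ⟨cy, hcy, wy, hwy⟩ := (mem_gball G).1 hy
    obtain ⟨wcx, hwcx, hscx⟩ := chain_walk G hu t cx hcx
    obtain ⟨wcy, hwcy, hscy⟩ := chain_walk G hu t cy hcy
    refine ⟨wx.append (wcx.append (wcy.reverse.append wy.reverse)), ?_, ?_⟩
    · -- length bound
      have hlen : (wx.append (wcx.append (wcy.reverse.append wy.reverse))).length
          ≤ 2 * r + 2 * (2 * r * t) := by
        simp only [SimpleGraph.Walk.length_append, SimpleGraph.Walk.length_reverse]
        omega
      have hcast : ((wx.append (wcx.append (wcy.reverse.append wy.reverse))).length : ℝ)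
          ≤ 2 * (r : ℝ) + 2 * (2 * r * t) := by
        calc ((wx.append (wcx.append (wcy.reverse.append wy.reverse))).length : ℝ)
            ≤ ((2 * r + 2 * (2 * r * t) : ℕ) : ℝ) := by exact_mod_cast hlen
        _ = 2 * (r : ℝ) + 2 * (2 * r * t) := by push_cast; ring
      have hb : (1 : ℝ) < 2 := one_lt_two
      have htlog : (t : ℝ) ≤ Real.logb 2 n := by
        have h1 : ((2 : ℝ) ^ t) ≤ (n : ℝ) := by exact_mod_cast hpow
        have h2 : Real.logb 2 ((2 : ℝ) ^ t) ≤ Real.logb 2 (n : ℝ) :=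
          Real.logb_le_logb_of_le hb (by positivity) h1
        rwa [Real.logb_pow, Real.logb_self_eq_one hb, mul_one] at h2
      have hlog0 : (0 : ℝ) ≤ Real.logb 2 n := le_trans (Nat.cast_nonneg t) htlog
      have hr0 : (0 : ℝ) ≤ (r : ℝ) := Nat.cast_nonneg r
      have hmul : 4 * (r : ℝ) * (t : ℝ) ≤ 4 * (r : ℝ) * Real.logb 2 n := by
        apply mul_le_mul_of_nonneg_left htlog
        positivity
      have hmul2 : 4 * (r : ℝ) * Real.logb 2 n ≤ 6 * (r : ℝ) * Real.logb 2 n := by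
        apply mul_le_mul_of_nonneg_right _ hlog0
        linarith
      calc ((wx.append (wcx.append (wcy.reverse.append wy.reverse))).length : ℝ)
          ≤ 2 * (r : ℝ) + 2 * (2 * r * t) := hcast
      _ = 4 * (r : ℝ) * (t : ℝ) + 2 * r := by ring
      _ ≤ 6 * r * Real.logb 2 n + 2 * r := by linarith
    · -- support
      intro p hp
      rcases mem_support_append G hp with h | h
      · exact walk_support_gball G wx hcx hwx p h
      rcases mem_support_append G h with h | h
      · exact hscx p h
      rcases mem_support_append G h with h | h
      · rw [SimpleGraph.Walk.support_reverse, List.mem_reverse] at h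
        exact hscy p h
      · rw [SimpleGraph.Walk.support_reverse, List.mem_reverse] at h
        exact walk_support_gball G wy hcy hwy p h

/-- One level of the decomposition: process the pool `P` completely, producing
clusters that are pairwise `2r`-separated, and a deferred set of at most half of `P`. -/
lemma level_ex (n : ℕ) (hn : Fintype.card V = n) (hn2 : 2 ≤ n) (r : ℕ) :
    ∀ (k : ℕ) (P : Finset V), P.card ≤ k →
    ∃ (cs : List (Finset V)) (D : Finset V),
      (∀ C ∈ cs, C.Nonempty) ∧
      (∀ C ∈ cs, Good G n r C) ∧
      (∀ C ∈ cs, C ⊆ P) ∧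
      D ⊆ P ∧
      List.Pairwise Disjoint cs ∧
      (∀ C ∈ cs, Disjoint C D) ∧
      (∀ x ∈ P, x ∈ D ∨ ∃ C ∈ cs, x ∈ C) ∧
      List.Pairwise (fun C C' => Disjoint (gball G C r) (gball G C' r)) cs ∧
      2 * D.card ≤ P.card := by
  intro k
  induction k with
  | zero =>
    intro P hP
    have : P = ∅ := Finset.card_eq_zero.1 (by omega)
    subst this
    exact ⟨[], ∅, by simp, by simp, by simp, by simp, by simp, by simp, by simp, by simp, by simp⟩
  | succ k ih =>
    intro P hP
    by_cases hPe : P = ∅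
    · subst hPe
      exact ⟨[], ∅, by simp, by simp, by simp, by simp, by simp, by simp, by simp, by simp, by simp⟩
    · have hPne : P.Nonempty := Finset.nonempty_iff_ne_empty.2 hPe
      obtain ⟨C, R, hCne, hCR, hRP, hRC, hfar, hgood⟩ := carve G n hn hn2 r P hPne
      have hRne : R.Nonempty := hCne.mono hCR
      have hss : P \ R ⊂ P := Finset.sdiff_ssubset hRP hRne
      have hcard : (P \ R).card ≤ k := by
        have := Finset.card_lt_card hss
        omega
      obtain ⟨cs', D', h1, h2, h3, h4, h5, h6, h7, h8, h9⟩ := ih (P \ R) hcard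
      refine ⟨C :: cs', D' ∪ (R \ C), ?_, ?_, ?_, ?_, ?_, ?_, ?_, ?_, ?_⟩
      · intro C' hC'
        rcases List.mem_cons.1 hC' with h | h
        · subst h; exact hCne
        · exact h1 C' h
      · intro C' hC'
        rcases List.mem_cons.1 hC' with h | h
        · subst h; exact hgood
        · exact h2 C' h
      · intro C' hC'
        rcases List.mem_cons.1 hC' with h | h
        · subst h; exact hCR.trans hRP
        · exact (h3 C' h).trans (Finset.sdiff_subset)
      · exact Finset.union_subset (h4.trans Finset.sdiff_subset)
          ((Finset.sdiff_subset).trans hRP)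
      · refine List.Pairwise.cons ?_ h5
        intro C' hC'
        have hC'sub : C' ⊆ P \ R := h3 C' hC'
        exact Finset.disjoint_left.2 fun a haC haC' =>
          (Finset.mem_sdiff.1 (hC'sub haC')).2 (hCR haC)
      · intro C' hC'
        rcases List.mem_cons.1 hC' with h | h
        · subst h
          refine Finset.disjoint_union_right.2 ⟨?_, Finset.disjoint_sdiff⟩
          exact Finset.disjoint_left.2 fun a haC haD =>
            (Finset.mem_sdiff.1 (h4 haD)).2 (hCR haC)
        · refine Finset.disjoint_union_right.2 ⟨h6 C' h, ?_⟩
          exact Finset.disjoint_left.2 fun a haC' haRC =>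
            (Finset.mem_sdiff.1 (h3 C' h haC')).2 ((Finset.mem_sdiff.1 haRC).1)
      · intro x hxP
        by_cases hxR : x ∈ R
        · by_cases hxC : x ∈ C
          · exact Or.inr ⟨C, List.mem_cons_self, hxC⟩
          · exact Or.inl (Finset.mem_union_right _ (Finset.mem_sdiff.2 ⟨hxR, hxC⟩))
        · rcases h7 x (Finset.mem_sdiff.2 ⟨hxP, hxR⟩) with h | ⟨C', hC', hxC'⟩
          · exact Or.inl (Finset.mem_union_left _ h)
          · exact Or.inr ⟨C', List.mem_cons_of_mem _ hC', hxC'⟩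
      · refine List.Pairwise.cons ?_ h8
        intro C' hC'
        rw [Finset.disjoint_left]
        intro v hv hv'
        obtain ⟨c, hc, w, hw⟩ := (mem_gball G).1 hv
        obtain ⟨c', hc', w', hw'⟩ := (mem_gball G).1 hv'
        have hc'PR : c' ∈ P \ R := h3 C' hC' hc'
        have hc'P : c' ∈ P := (Finset.mem_sdiff.1 hc'PR).1
        have hc'R : c' ∉ R := (Finset.mem_sdiff.1 hc'PR).2
        apply hfar c' hc'P hc'R
        refine (mem_gball G).2 ⟨c, hc, w'.reverse.append w, ?_⟩
        rw [SimpleGraph.Walk.length_append, SimpleGraph.Walk.length_reverse]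
        omega
      · have hD'card : 2 * D'.card ≤ (P \ R).card := h9
        have h1' : (P \ R).card = P.card - R.card := Finset.card_sdiff_of_subset hRP
        have h2' : R.card ≤ P.card := Finset.card_le_card hRP
        have h3' : (D' ∪ (R \ C)).card ≤ D'.card + (R \ C).card := Finset.card_union_le _ _
        omega

/-- The full decomposition: a list of levels. -/
lemma run_ex (n : ℕ) (hn : Fintype.card V = n) (hn2 : 2 ≤ n) (r : ℕ) :
    ∀ (k : ℕ) (P : Finset V), P.card ≤ k →
    ∃ levels : List (List (Finset V)),
      (∀ C ∈ levels.flatten, C.Nonempty) ∧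
      (∀ C ∈ levels.flatten, Good G n r C) ∧
      (∀ C ∈ levels.flatten, C ⊆ P) ∧
      List.Pairwise Disjoint levels.flatten ∧
      (∀ x ∈ P, ∃ C ∈ levels.flatten, x ∈ C) ∧
      (∀ ℓ ∈ levels, List.Pairwise (fun C C' => Disjoint (gball G C r) (gball G C' r)) ℓ) ∧
      ((P = ∅ ∧ levels = []) ∨ 2 ^ levels.length ≤ 2 * P.card) := by
  intro k
  induction k with
  | zero =>
    intro P hP
    have : P = ∅ := Finset.card_eq_zero.1 (by omega)
    subst this
    exact ⟨[], by simp, by simp, by simp, by simp, by simp, by simp, Or.inl ⟨rfl, rfl⟩⟩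
  | succ k ih =>
    intro P hP
    by_cases hPe : P = ∅
    · subst hPe
      exact ⟨[], by simp, by simp, by simp, by simp, by simp, by simp, Or.inl ⟨rfl, rfl⟩⟩
    · have hPne : P.Nonempty := Finset.nonempty_iff_ne_empty.2 hPe
      obtain ⟨cs, D, h1, h2, h3, h4, h5, h6, h7, h8, h9⟩ :=
        level_ex G n hn hn2 r (k + 1) P hP
      have hPpos : 1 ≤ P.card := Finset.card_pos.2 hPne
      have hDlt : D.card ≤ k := by omega
      obtain ⟨levels', g1, g2, g3, g4, g5, g6, g7⟩ := ih D hDlt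
      refine ⟨cs :: levels', ?_, ?_, ?_, ?_, ?_, ?_, ?_⟩
      · intro C hC
        rw [List.flatten_cons, List.mem_append] at hC
        rcases hC with h | h
        · exact h1 C h
        · exact g1 C h
      · intro C hC
        rw [List.flatten_cons, List.mem_append] at hC
        rcases hC with h | h
        · exact h2 C h
        · exact g2 C h
      · intro C hC
        rw [List.flatten_cons, List.mem_append] at hC
        rcases hC with h | h
        · exact h3 C h
        · exact (g3 C h).trans h4
      · rw [List.flatten_cons, List.pairwise_append]
        refine ⟨h5, g4, ?_⟩
        intro C hC C'' hC''
        exact Finset.disjoint_of_subset_right (g3 C'' hC'') (h6 C hC)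
      · intro x hxP
        rcases h7 x hxP with h | ⟨C, hC, hxC⟩
        · obtain ⟨C, hC, hxC⟩ := g5 x h
          exact ⟨C, by rw [List.flatten_cons, List.mem_append]; exact Or.inr hC, hxC⟩
        · exact ⟨C, by rw [List.flatten_cons, List.mem_append]; exact Or.inl hC, hxC⟩
      · intro ℓ hℓ
        rcases List.mem_cons.1 hℓ with h | h
        · subst h; exact h8
        · exact g6 ℓ h
      · right
        rcases g7 with ⟨hDe, hle⟩ | hle
        · subst hle
          simp only [List.length_cons, List.length_nil, pow_one]
          omega
        · have hp : 2 ^ (levels'.length + 1) = 2 ^ levels'.length * 2 := pow_succ 2 _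
          simp only [List.length_cons]
          omega

lemma card_filter_fin {α : Type*} (l : List α) (p : α → Prop) [DecidablePred p] :
    (Finset.univ.filter fun i : Fin l.length => p (l.get i)).card
      = l.countP (fun a => decide (p a)) := by
  induction l with
  | nil => simp
  | cons a l ih =>
    rw [Finset.card_filter]
    show (∑ i : Fin (l.length + 1), if p ((a :: l).get i) then 1 else 0)
        = List.countP (fun a => decide (p a)) (a :: l)
    rw [Fin.sum_univ_succ]
    simp only [List.get_eq_getElem, Fin.val_succ, List.getElem_cons_succ, Fin.val_zero,
      List.getElem_cons_zero]
    simp only [List.get_eq_getElem] at ih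
    rw [← Finset.card_filter, ih, List.countP_cons]
    by_cases hpa : p a <;> simp [hpa, Nat.add_comm]

lemma countP_le_one {r : ℕ} {l : List (Finset V)} (v : V)
    (h : List.Pairwise (fun C C' => Disjoint (gball G C r) (gball G C' r)) l) :
    l.countP (fun C => decide (v ∈ gball G C r)) ≤ 1 := by
  induction l with
  | nil => simp
  | cons C t ih =>
    rw [List.countP_cons]
    obtain ⟨hC, ht⟩ := List.pairwise_cons.1 h
    by_cases hv : v ∈ gball G C r
    · have hz : t.countP (fun C => decide (v ∈ gball G C r)) = 0 := by
        refine List.countP_eq_zero.2 fun C' hC' => ?_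
        simp only [decide_eq_true_eq]
        exact fun hv' => Finset.disjoint_left.1 (hC C' hC') hv hv'
      simp [hz, hv]
    · have := ih ht
      simp only [decide_eq_true_eq, if_neg hv]
      omega

lemma countP_flatten_le {r : ℕ} (LL : List (List (Finset V))) (v : V)
    (h : ∀ ℓ ∈ LL, List.Pairwise (fun C C' => Disjoint (gball G C r) (gball G C' r)) ℓ) :
    (LL.flatten).countP (fun C => decide (v ∈ gball G C r)) ≤ LL.length := by
  induction LL with
  | nil => simp
  | cons ℓ LL ih =>
    rw [List.flatten_cons, List.countP_append]
    have h1 := countP_le_one G v (h ℓ (List.mem_cons_self))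
    have h2 := ih (fun ℓ' h' => h ℓ' (List.mem_cons_of_mem _ h'))
    simp only [List.length_cons]
    omega

end LDDAux

/-- **Low-diameter decomposition.** For any graph `G` on `n ≥ 10` vertices and any `r ≥ 1`
there is a partition `V = V₁ ∪ ⋯ ∪ V_m` into nonempty pairwise disjoint sets such that
(1) any two vertices of `B(Vᵢ, r)` are joined by a path inside `G[B(Vᵢ, r)]` of length at
most `6 r log₂ n + 2 r`, and (2) every vertex lies in at most `2 log₂ n` of the balls
`B(Vᵢ, r)`. -/
theorem low_diameter_decomposition
    {V : Type*} [Fintype V] [DecidableEq V] (G : SimpleGraph V)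
    (n : ℕ) (hn : Fintype.card V = n) (hn10 : 10 ≤ n) (r : ℕ) (hr : 1 ≤ r) :
    ∃ (m : ℕ) (𝒱 : Fin m → Finset V),
      (∀ i, (𝒱 i).Nonempty) ∧
      (∀ i j, i ≠ j → Disjoint (𝒱 i) (𝒱 j)) ∧
      (Finset.univ.biUnion 𝒱 = Finset.univ) ∧
      (∀ i, ∀ u ∈ gball G (𝒱 i) r, ∀ v ∈ gball G (𝒱 i) r,
        ∃ w : G.Walk u v, ((w.length : ℝ) ≤ 6 * r * Real.logb 2 n + 2 * r ∧
          ∀ x ∈ w.support, x ∈ gball G (𝒱 i) r)) ∧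
      (∀ v : V,
        ((Finset.univ.filter (fun i : Fin m => v ∈ gball G (𝒱 i) r)).card : ℝ) ≤
          2 * Real.logb 2 n) := by
  classical
  have hn2 : 2 ≤ n := by omega
  have hcard : (Finset.univ : Finset V).card ≤ n := by
    rw [Finset.card_univ, hn]
  obtain ⟨levels, h1, h2, h3, h4, h5, h6, h7⟩ :=
    LDDAux.run_ex G n hn hn2 r n (Finset.univ : Finset V) hcard
  set final : List (Finset V) := levels.flatten with hfinal
  have hVne : (Finset.univ : Finset V).Nonempty := by
    rw [← Finset.card_pos, Finset.card_univ, hn]; omega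
  have hL : 2 ^ levels.length ≤ 2 * n := by
    rcases h7 with ⟨he, _⟩ | h
    · exact absurd he (Finset.nonempty_iff_ne_empty.1 hVne)
    · rwa [Finset.card_univ, hn] at h
  refine ⟨final.length, fun i => final.get i, ?_, ?_, ?_, ?_, ?_⟩
  · intro i
    exact h1 _ (List.get_mem final i)
  · intro i j hij
    rcases lt_trichotomy i j with h | h | h
    · exact List.pairwise_iff_get.1 h4 i j h
    · exact absurd h hij
    · exact (List.pairwise_iff_get.1 h4 j i h).symm
  · refine Finset.eq_univ_iff_forall.2 fun v => ?_
    obtain ⟨C, hC, hvC⟩ := h5 v (Finset.mem_univ v)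
    obtain ⟨i, hi⟩ := List.mem_iff_get.1 hC
    exact Finset.mem_biUnion.2 ⟨i, Finset.mem_univ i, by rw [hi]; exact hvC⟩
  · intro i
    exact h2 _ (List.get_mem final i)
  · intro v
    have hcount := LDDAux.countP_flatten_le G (r := r) levels v h6
    have hfilter :
        (Finset.univ.filter (fun i : Fin final.length => v ∈ gball G (final.get i) r)).card
          = final.countP (fun C => decide (v ∈ gball G C r)) :=
      LDDAux.card_filter_fin final (fun C => v ∈ gball G C r)
    have hcardle :
        (Finset.univ.filter (fun i : Fin final.length => v ∈ gball G (final.get i) r)).card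
          ≤ levels.length := by
      rw [hfilter]; exact hcount
    -- now the real bound
    have hb : (1 : ℝ) < 2 := one_lt_two
    have hnn : 2 * n ≤ n * n := Nat.mul_le_mul_right n hn2
    have h2L : 2 ^ levels.length ≤ n * n := le_trans hL hnn
    have h2LR : ((2 : ℝ)) ^ levels.length ≤ (n : ℝ) * n := by exact_mod_cast h2L
    have hLlog : (levels.length : ℝ) ≤ 2 * Real.logb 2 n := by
      have hmono : Real.logb 2 ((2 : ℝ) ^ levels.length) ≤ Real.logb 2 ((n : ℝ) * n) :=
        Real.logb_le_logb_of_le hb (by positivity) h2LR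
      have e1 : Real.logb 2 ((2 : ℝ) ^ levels.length) = (levels.length : ℝ) := by
        rw [Real.logb_pow, Real.logb_self_eq_one hb, mul_one]
      have e2 : Real.logb 2 ((n : ℝ) * n) = 2 * Real.logb 2 n := by
        have hn0 : (n : ℝ) ≠ 0 := by positivity
        rw [Real.logb_mul hn0 hn0]; ring
      rw [e1, e2] at hmono
      exact hmono
    calc ((Finset.univ.filter (fun i : Fin final.length => v ∈ gball G (final.get i) r)).card : ℝ)
        ≤ (levels.length : ℝ) := by exact_mod_cast hcardle
    _ ≤ 2 * Real.logb 2 n := hLlog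

end
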